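/- Let m ≥ 3 and α, β ∈ ZMod m with α ≠ 0, β ≠ 0, α ≠ β and 2(α−β) ≠ 0. Then the graph (G_6; m) has girth exactly 6; moreover the vertices x* and y* have degree m and each of the remaining 4m vertices has degree 3, so (G_6; m) is a (3,m;6)-graph on 4m+2 vertices. -/

import Mathlib

/-- The four non-pinned base vertices of the voltage graph `G_6`. -/
inductive W6 : Type
  | x | y | x0 | y0

/-- Vertex set of `(G_6; m)`: the pinned vertices `x* = Sum.inl true`,
`y* = Sum.inl false`, together with `{x, y, x₀, y₀} × ZMod m`. -/
def V6 (m : ℕ) : Type := Bool ⊕ (W6 × ZMod m)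

/-- The edge relation of `(G_6; m)`: for every `i : ZMod m`, `x*` is adjacent to `(x,i)`,
`y*` to `(y,i)`, `(x,i)` to `(y,i)`, `(x,i)` to `(x₀,i)`, `(y,i)` to `(y₀,i)`, and
`(x₀,i)` to `(y₀,i+α)` and to `(y₀,i+β)`. -/
def rel6 (m : ℕ) (α β : ZMod m) : V6 m → V6 m → Prop := fun a b =>
  (∃ i : ZMod m, a = Sum.inl true ∧ b = Sum.inr (W6.x, i)) ∨
  (∃ i : ZMod m, a = Sum.inl false ∧ b = Sum.inr (W6.y, i)) ∨
  (∃ i : ZMod m, a = Sum.inr (W6.x, i) ∧ b = Sum.inr (W6.y, i)) ∨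
  (∃ i : ZMod m, a = Sum.inr (W6.x, i) ∧ b = Sum.inr (W6.x0, i)) ∨
  (∃ i : ZMod m, a = Sum.inr (W6.y, i) ∧ b = Sum.inr (W6.y0, i)) ∨
  (∃ i : ZMod m, a = Sum.inr (W6.x0, i) ∧ b = Sum.inr (W6.y0, i + α)) ∨
  (∃ i : ZMod m, a = Sum.inr (W6.x0, i) ∧ b = Sum.inr (W6.y0, i + β))

/-- The graph `(G_6; m)` with voltages `α` and `β` on the two arcs from `x₀` to `y₀`. -/
def G6 (m : ℕ) (α β : ZMod m) : SimpleGraph (V6 m) := SimpleGraph.fromRel (rel6 m α β)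

deriving instance DecidableEq for W6

instance : Fintype W6 := ⟨{W6.x, W6.y, W6.x0, W6.y0}, fun u => by cases u <;> decide⟩

attribute [reducible] V6

section Aux
variable {m : ℕ} {α β : ZMod m}

@[simp] lemma V6.inl_eq_inl {a b : Bool} : @Eq (V6 m) (Sum.inl a) (Sum.inl b) ↔ a = b :=
  ⟨fun h => Sum.inl.inj h, fun h => h ▸ rfl⟩

@[simp] lemma V6.inl_ne_inr {a : Bool} {p : W6 × ZMod m} :
    @Eq (V6 m) (Sum.inl a) (Sum.inr p) ↔ False := ⟨fun h => Sum.inl_ne_inr h, False.elim⟩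

@[simp] lemma V6.inr_ne_inl {a : Bool} {p : W6 × ZMod m} :
    @Eq (V6 m) (Sum.inr p) (Sum.inl a) ↔ False := ⟨fun h => Sum.inr_ne_inl h, False.elim⟩

@[simp] lemma V6.inr_eq_inr {p q : W6 × ZMod m} : @Eq (V6 m) (Sum.inr p) (Sum.inr q) ↔ p = q :=
  ⟨fun h => Sum.inr.inj h, fun h => h ▸ rfl⟩

@[simp] lemma st12z1 (u : ZMod m) : u + α - β = u ↔ α = β := by
  constructor <;> intro h <;> first | linear_combination h | linear_combination -h

@[simp] lemma st12z2 (u : ZMod m) : u = u + α - β ↔ α = β := by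
  constructor <;> intro h <;> first | linear_combination h | linear_combination -h

@[simp] lemma st12z3 (u : ZMod m) : u + β - α = u ↔ α = β := by
  constructor <;> intro h <;> first | linear_combination h | linear_combination -h

@[simp] lemma st12z4 (u : ZMod m) : u = u + β - α ↔ α = β := by
  constructor <;> intro h <;> first | linear_combination h | linear_combination -h

@[simp] lemma st12z5 (u : ZMod m) : u - α + β = u ↔ α = β := by
  constructor <;> intro h <;> first | linear_combination h | linear_combination -h

@[simp] lemma st12z6 (u : ZMod m) : u = u - α + β ↔ α = β := by
  constructor <;> intro h <;> first | linear_combination h | linear_combination -h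

@[simp] lemma st12z7 (u : ZMod m) : u - β + α = u ↔ α = β := by
  constructor <;> intro h <;> first | linear_combination h | linear_combination -h

@[simp] lemma st12z8 (u : ZMod m) : u = u - β + α ↔ α = β := by
  constructor <;> intro h <;> first | linear_combination h | linear_combination -h

@[simp] lemma st12z9 (u : ZMod m) : u + α - β + α = u + β ↔ 2 * (α - β) = 0 := by
  constructor <;> intro h <;> first | linear_combination h | linear_combination -h

@[simp] lemma st12z10 (u : ZMod m) : u + β = u + α - β + α ↔ 2 * (α - β) = 0 := by
  constructor <;> intro h <;> first | linear_combination h | linear_combination -h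

@[simp] lemma st12z11 (u : ZMod m) : u + β - α + β = u + α ↔ 2 * (α - β) = 0 := by
  constructor <;> intro h <;> first | linear_combination h | linear_combination -h

@[simp] lemma st12z12 (u : ZMod m) : u + α = u + β - α + β ↔ 2 * (α - β) = 0 := by
  constructor <;> intro h <;> first | linear_combination h | linear_combination -h

@[simp] lemma st12z13 (u : ZMod m) : u - α + β - α = u - β ↔ 2 * (α - β) = 0 := by
  constructor <;> intro h <;> first | linear_combination h | linear_combination -h

@[simp] lemma st12z14 (u : ZMod m) : u - β = u - α + β - α ↔ 2 * (α - β) = 0 := by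
  constructor <;> intro h <;> first | linear_combination h | linear_combination -h

@[simp] lemma st12z15 (u : ZMod m) : u - β + α - β = u - α ↔ 2 * (α - β) = 0 := by
  constructor <;> intro h <;> first | linear_combination h | linear_combination -h

@[simp] lemma st12z16 (u : ZMod m) : u - α = u - β + α - β ↔ 2 * (α - β) = 0 := by
  constructor <;> intro h <;> first | linear_combination h | linear_combination -h

@[simp] lemma st12z17 (u : ZMod m) : u - α + β - α = u - α ↔ α = β := by
  constructor <;> intro h <;> first | linear_combination h | linear_combination -h

@[simp] lemma st12z18 (u : ZMod m) : u - α = u - α + β - α ↔ α = β := by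
  constructor <;> intro h <;> first | linear_combination h | linear_combination -h

@[simp] lemma st12z19 (u : ZMod m) : u - β + α - β = u - β ↔ α = β := by
  constructor <;> intro h <;> first | linear_combination h | linear_combination -h

@[simp] lemma st12z20 (u : ZMod m) : u - β = u - β + α - β ↔ α = β := by
  constructor <;> intro h <;> first | linear_combination h | linear_combination -h

@[simp] lemma st12z21 (u : ZMod m) : u + α - β + α = u + α ↔ α = β := by
  constructor <;> intro h <;> first | linear_combination h | linear_combination -h

@[simp] lemma st12z22 (u : ZMod m) : u + α = u + α - β + α ↔ α = β := by
  constructor <;> intro h <;> first | linear_combination h | linear_combination -h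

@[simp] lemma st12z23 (u : ZMod m) : u + β - α + β = u + β ↔ α = β := by
  constructor <;> intro h <;> first | linear_combination h | linear_combination -h

@[simp] lemma st12z24 (u : ZMod m) : u + β = u + β - α + β ↔ α = β := by
  constructor <;> intro h <;> first | linear_combination h | linear_combination -h

@[simp] lemma st12z25 (u : ZMod m) : u + α = u ↔ α = 0 := by
  constructor <;> intro h <;> first | linear_combination h | linear_combination -h

@[simp] lemma st12z26 (u : ZMod m) : u = u + α ↔ α = 0 := by
  constructor <;> intro h <;> first | linear_combination h | linear_combination -h

@[simp] lemma st12z27 (u : ZMod m) : u + β = u ↔ β = 0 := by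
  constructor <;> intro h <;> first | linear_combination h | linear_combination -h

@[simp] lemma st12z28 (u : ZMod m) : u = u + β ↔ β = 0 := by
  constructor <;> intro h <;> first | linear_combination h | linear_combination -h

@[simp] lemma st12z29 (u : ZMod m) : u - α = u ↔ α = 0 := by
  constructor <;> intro h <;> first | linear_combination h | linear_combination -h

@[simp] lemma st12z30 (u : ZMod m) : u = u - α ↔ α = 0 := by
  constructor <;> intro h <;> first | linear_combination h | linear_combination -h

@[simp] lemma st12z31 (u : ZMod m) : u - β = u ↔ β = 0 := by
  constructor <;> intro h <;> first | linear_combination h | linear_combination -h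

@[simp] lemma st12z32 (u : ZMod m) : u = u - β ↔ β = 0 := by
  constructor <;> intro h <;> first | linear_combination h | linear_combination -h

@[simp] lemma st12z33 (u : ZMod m) : u + α = u + β ↔ α = β := by
  constructor <;> intro h <;> first | linear_combination h | linear_combination -h

@[simp] lemma st12z34 (u : ZMod m) : u + β = u + α ↔ α = β := by
  constructor <;> intro h <;> first | linear_combination h | linear_combination -h

@[simp] lemma st12z35 (u : ZMod m) : u - α = u - β ↔ α = β := by
  constructor <;> intro h <;> first | linear_combination h | linear_combination -h

@[simp] lemma st12z36 (u : ZMod m) : u - β = u - α ↔ α = β := by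
  constructor <;> intro h <;> first | linear_combination h | linear_combination -h


lemma adj_xs (w : V6 m) : (G6 m α β).Adj (Sum.inl true) w ↔ ∃ i, w = Sum.inr (W6.x, i) := by
  simp only [G6, SimpleGraph.fromRel_adj, rel6]
  constructor
  · rintro ⟨hne, h | h⟩ <;> simp_all
  · rintro ⟨i, rfl⟩; simp

lemma adj_ys (w : V6 m) : (G6 m α β).Adj (Sum.inl false) w ↔ ∃ i, w = Sum.inr (W6.y, i) := by
  simp only [G6, SimpleGraph.fromRel_adj, rel6]
  constructor
  · rintro ⟨hne, h | h⟩ <;> simp_all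
  · rintro ⟨i, rfl⟩; simp

lemma adj_x (i : ZMod m) (w : V6 m) : (G6 m α β).Adj (Sum.inr (W6.x, i)) w ↔
    w = Sum.inl true ∨ w = Sum.inr (W6.y, i) ∨ w = Sum.inr (W6.x0, i) := by
  simp only [G6, SimpleGraph.fromRel_adj, rel6]
  constructor
  · rintro ⟨hne, h | h⟩ <;> simp_all
  · rintro (rfl | rfl | rfl) <;> simp

lemma adj_y (i : ZMod m) (w : V6 m) : (G6 m α β).Adj (Sum.inr (W6.y, i)) w ↔
    w = Sum.inl false ∨ w = Sum.inr (W6.x, i) ∨ w = Sum.inr (W6.y0, i) := by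
  simp only [G6, SimpleGraph.fromRel_adj, rel6]
  constructor
  · rintro ⟨hne, h | h⟩ <;> simp_all <;> tauto
  · rintro (rfl | rfl | rfl) <;> simp

lemma adj_x0 (i : ZMod m) (w : V6 m) : (G6 m α β).Adj (Sum.inr (W6.x0, i)) w ↔
    w = Sum.inr (W6.x, i) ∨ w = Sum.inr (W6.y0, i + α) ∨ w = Sum.inr (W6.y0, i + β) := by
  simp only [G6, SimpleGraph.fromRel_adj, rel6]
  constructor
  · rintro ⟨hne, h | h⟩ <;> simp_all
  · rintro (rfl | rfl | rfl) <;> simp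

lemma adj_y0 (i : ZMod m) (w : V6 m) : (G6 m α β).Adj (Sum.inr (W6.y0, i)) w ↔
    w = Sum.inr (W6.y, i) ∨ w = Sum.inr (W6.x0, i - α) ∨ w = Sum.inr (W6.x0, i - β) := by
  simp only [G6, SimpleGraph.fromRel_adj, rel6]
  constructor
  · rintro ⟨hne, h | h⟩
    · simp_all
    · rcases h with ⟨j,h1,h2⟩|⟨j,h1,h2⟩|⟨j,h1,h2⟩|⟨j,h1,h2⟩|⟨j,h1,h2⟩|⟨j,h1,h2⟩|⟨j,h1,h2⟩ <;>
        simp_all <;>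
      · rcases h2 with ⟨h2, h3⟩
        subst h1
        simp [eq_sub_of_add_eq h2.symm]
  · rintro (rfl | rfl | rfl)
    · refine ⟨by simp, Or.inr ?_⟩
      exact Or.inr <| Or.inr <| Or.inr <| Or.inr <| Or.inl ⟨i, rfl, rfl⟩
    · refine ⟨by simp, Or.inr ?_⟩
      exact Or.inr <| Or.inr <| Or.inr <| Or.inr <| Or.inr <| Or.inl ⟨i - α, rfl, by simp⟩
    · refine ⟨by simp, Or.inr ?_⟩
      exact Or.inr <| Or.inr <| Or.inr <| Or.inr <| Or.inr <| Or.inr ⟨i - β, rfl, by simp⟩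

/-- 2-coloring witnessing bipartiteness. -/
def col6 : V6 m → Bool := fun v =>
  match v with
  | .inl b => b
  | .inr (W6.x, _) => false
  | .inr (W6.y, _) => true
  | .inr (W6.x0, _) => true
  | .inr (W6.y0, _) => false

lemma col6_ne {a b : V6 m} (h : (G6 m α β).Adj a b) : col6 a ≠ col6 b := by
  obtain ⟨-, h | h⟩ := h <;>
    rcases h with ⟨i,rfl,rfl⟩|⟨i,rfl,rfl⟩|⟨i,rfl,rfl⟩|⟨i,rfl,rfl⟩|⟨i,rfl,rfl⟩|⟨i,rfl,rfl⟩|⟨i,rfl,rfl⟩ <;>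
    simp [col6]

lemma walk_parity {u v : V6 m} (p : (G6 m α β).Walk u v) :
    Even p.length ↔ col6 u = col6 v := by
  induction p with
  | nil => simp
  | cons h q ih =>
    have hne := col6_ne h
    rw [SimpleGraph.Walk.length_cons, Nat.even_add_one, ih]
    revert hne
    cases hcu : col6 _ <;> cases hcb : col6 _ <;> cases hcv : col6 _ <;> simp_all

set_option maxHeartbeats 2000000 in
lemma no4 (hα : α ≠ 0) (hβ : β ≠ 0) (hαβ : α ≠ β) (h2 : 2 * (α - β) ≠ 0) :
    ∀ a b c d : V6 m, (G6 m α β).Adj a b → (G6 m α β).Adj b c → (G6 m α β).Adj c d →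
      (G6 m α β).Adj d a → a ≠ c → b ≠ d → False := by
  have h2' : 2 * (β - α) ≠ 0 := fun h => h2 (by linear_combination -h)
  intro a b c d h1 hbc hcd h4 hac hbd
  replace h4 := h4.symm
  rcases a with tf | ⟨u, i⟩
  · cases tf <;>
      aesop (add norm simp [adj_xs, adj_ys, adj_x, adj_y, adj_x0, adj_y0])
  · cases u <;>
      [(rw [adj_x] at h1 h4; rcases h1 with rfl|rfl|rfl <;> rcases h4 with rfl|rfl|rfl);
       (rw [adj_y] at h1 h4; rcases h1 with rfl|rfl|rfl <;> rcases h4 with rfl|rfl|rfl);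
       (rw [adj_x0] at h1 h4; rcases h1 with rfl|rfl|rfl <;> rcases h4 with rfl|rfl|rfl);
       (rw [adj_y0] at h1 h4; rcases h1 with rfl|rfl|rfl <;> rcases h4 with rfl|rfl|rfl)] <;>
      first
        | exact hbd rfl
        | aesop (add norm simp [adj_xs, adj_ys, adj_x, adj_y, adj_x0, adj_y0])

end Aux

section Main
variable {m : ℕ} {α β : ZMod m}

lemma nb_xs_eq : (G6 m α β).neighborSet (Sum.inl true) =
    Set.range (fun i : ZMod m => (Sum.inr (W6.x, i) : V6 m)) := by
  ext w
  simp [SimpleGraph.mem_neighborSet, adj_xs, Set.mem_range, eq_comm]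

lemma nb_ys_eq : (G6 m α β).neighborSet (Sum.inl false) =
    Set.range (fun i : ZMod m => (Sum.inr (W6.y, i) : V6 m)) := by
  ext w
  simp [SimpleGraph.mem_neighborSet, adj_ys, Set.mem_range, eq_comm]

lemma ncard_range_m [NeZero m] (u : W6) :
    (Set.range (fun i : ZMod m => (Sum.inr (u, i) : V6 m))).ncard = m := by
  rw [← Set.image_univ, Set.ncard_image_of_injective _ (fun i j h => by simpa using h),
    Set.ncard_univ, Nat.card_eq_fintype_card, ZMod.card]

lemma nb_inr_eq (u : W6) (i : ZMod m) :
    (G6 m α β).neighborSet (Sum.inr (u, i)) =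
      match u with
      | W6.x => {Sum.inl true, Sum.inr (W6.y, i), Sum.inr (W6.x0, i)}
      | W6.y => {Sum.inl false, Sum.inr (W6.x, i), Sum.inr (W6.y0, i)}
      | W6.x0 => {Sum.inr (W6.x, i), Sum.inr (W6.y0, i + α), Sum.inr (W6.y0, i + β)}
      | W6.y0 => {Sum.inr (W6.y, i), Sum.inr (W6.x0, i - α), Sum.inr (W6.x0, i - β)} := by
  cases u <;> ext w <;>
    simp [SimpleGraph.mem_neighborSet, adj_x, adj_y, adj_x0, adj_y0]

lemma nb_inr_ncard (hαβ : α ≠ β) (u : W6) (i : ZMod m) :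
    ((G6 m α β).neighborSet (Sum.inr (u, i))).ncard = 3 := by
  rw [nb_inr_eq]
  cases u <;>
    exact Set.ncard_eq_three.mpr ⟨_, _, _, by simp, by simp, by simp [hαβ], rfl⟩

lemma egirth_six (hm : 3 ≤ m) (hα : α ≠ 0) (hβ : β ≠ 0) (hαβ : α ≠ β)
    (h2 : 2 * (α - β) ≠ 0) : (G6 m α β).egirth = (6 : ℕ∞) := by
  haveI : NeZero m := ⟨by omega⟩
  haveI : Fact (1 < m) := ⟨by omega⟩
  have h01 : (0 : ZMod m) ≠ 1 := zero_ne_one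
  have a1 : (G6 m α β).Adj (Sum.inl true) (Sum.inr (W6.x, 0)) := (adj_xs _).mpr ⟨0, rfl⟩
  have a2 : (G6 m α β).Adj (Sum.inr (W6.x, 0)) (Sum.inr (W6.y, 0)) :=
    (adj_x _ _).mpr (Or.inr (Or.inl rfl))
  have a3 : (G6 m α β).Adj (Sum.inr (W6.y, 0)) (Sum.inl false) := (adj_y _ _).mpr (Or.inl rfl)
  have a4 : (G6 m α β).Adj (Sum.inl false) (Sum.inr (W6.y, 1)) := (adj_ys _).mpr ⟨1, rfl⟩
  have a5 : (G6 m α β).Adj (Sum.inr (W6.y, 1)) (Sum.inr (W6.x, 1)) :=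
    ((adj_x _ _).mpr (Or.inr (Or.inl rfl))).symm
  have a6 : (G6 m α β).Adj (Sum.inr (W6.x, 1)) (Sum.inl true) := (adj_x _ _).mpr (Or.inl rfl)
  let w : (G6 m α β).Walk (Sum.inl true) (Sum.inl true) :=
    .cons a1 (.cons a2 (.cons a3 (.cons a4 (.cons a5 (.cons a6 .nil)))))
  have hw : w.IsCycle := by
    refine ⟨⟨⟨?_⟩, by simp [w]⟩, ?_⟩
    · simp [w, SimpleGraph.Walk.edges, Sym2.eq_iff, h01, h01.symm]
    · simp [w, SimpleGraph.Walk.support_cons, h01, h01.symm]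
  have hub : (G6 m α β).egirth ≤ 6 := by
    calc (G6 m α β).egirth ≤ (w.length : ℕ∞) := by
          rw [SimpleGraph.egirth]
          exact iInf_le_of_le _ (iInf_le_of_le w (iInf_le _ hw))
      _ = 6 := by simp [w]
  refine le_antisymm hub (SimpleGraph.le_egirth.mpr fun v p hp => ?_)
  have hev : Even p.length := (walk_parity p).mpr rfl
  have h3 := hp.three_le_length
  have h4 : p.length ≠ 4 := by
    intro hlen
    cases p with
    | nil => simp at hlen
    | cons e1 q => cases q with
      | nil => simp at hlen
      | cons e2 q => cases q with
        | nil => simp at hlen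
        | cons e3 q => cases q with
          | nil => simp at hlen
          | cons e4 q => cases q with
            | cons e5 q => simp [SimpleGraph.Walk.length_cons] at hlen
            | nil =>
              have hnd := hp.support_nodup
              simp [SimpleGraph.Walk.support_cons] at hnd
              obtain ⟨⟨hbc, hbd, hba⟩, ⟨hcd, hca⟩, hda⟩ := hnd
              exact no4 hα hβ hαβ h2 _ _ _ _ e1 e2 e3 e4 (fun hh => hca hh.symm)
                (fun hh => hbd hh)
  have h6 : 6 ≤ p.length := by
    rcases hev with ⟨k, hk⟩
    omega
  exact_mod_cast h6

end Main

/-- for `m ≥ 3` and `α, β ∈ ZMod m` with `α ≠ 0`, `β ≠ 0`, `α ≠ β` and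
`2(α - β) ≠ 0`, the graph `(G_6; m)` has girth exactly 6; the vertices `x*`, `y*` have
degree `m` and each of the remaining `4m` vertices has degree 3, so `(G_6; m)` is a
`(3, m; 6)`-graph on `4m + 2` vertices. -/
theorem statement12 (m : ℕ) (hm : 3 ≤ m) (α β : ZMod m)
    (hα : α ≠ 0) (hβ : β ≠ 0) (hαβ : α ≠ β) (h2 : 2 * (α - β) ≠ 0) :
    (G6 m α β).egirth = (6 : ℕ∞) ∧
    ((G6 m α β).neighborSet (Sum.inl true)).ncard = m ∧
    ((G6 m α β).neighborSet (Sum.inl false)).ncard = m ∧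
    (∀ (u : W6) (i : ZMod m), ((G6 m α β).neighborSet (Sum.inr (u, i))).ncard = 3) ∧
    Nat.card (V6 m) = 4 * m + 2 := by
  haveI : NeZero m := ⟨by omega⟩
  refine ⟨egirth_six hm hα hβ hαβ h2, ?_, ?_, nb_inr_ncard hαβ, ?_⟩
  · rw [nb_xs_eq, ncard_range_m]
  · rw [nb_ys_eq, ncard_range_m]
  · have : Nat.card (V6 m) = Nat.card (Bool ⊕ W6 × ZMod m) := rfl
    rw [this, Nat.card_sum, Nat.card_prod, Nat.card_zmod]
    have hb : Nat.card Bool = 2 := by simp [Nat.card_eq_fintype_card]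
    have hw : Nat.card W6 = 4 := by
      rw [Nat.card_eq_fintype_card]
      rfl
    rw [hb, hw]
    ring
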